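/- For any rational t with t ≠ 0, ±1, ±2, there are no elements of finite order k ≥ 2 in the projectivized group L(t) of invertible elements of R(t,1) modulo rational scalars, except possibly k ∈ {2, 3, 4, 6}. -/

import Mathlib

open Matrix Polynomial

lemma tot_helper16 {k : ℕ} (hk : 2 ≤ k) (h : k.totient ≤ 2) : k ∈ ({2, 3, 4, 6} : Set ℕ) := by
  have hne : NeZero k := ⟨by omega⟩
  have hsq : ∀ a : ℕ, Nat.Coprime a k → ((a : ZMod k))^2 = 1 := by
    intro a hcop
    have hu := ZMod.pow_totient (ZMod.unitOfCoprime a hcop)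
    have h2 : (ZMod.unitOfCoprime a hcop) ^ 2 = 1 := by
      have hpos := Nat.totient_pos.mpr (by omega : 0 < k)
      interval_cases hh : k.totient
      · rw [show (ZMod.unitOfCoprime a hcop) = 1 from by simpa using hu]; simp
      · exact hu
    calc ((a : ZMod k))^2 = ((ZMod.unitOfCoprime a hcop : (ZMod k)ˣ) : ZMod k)^2 := by
          rw [ZMod.coe_unitOfCoprime]
      _ = (((ZMod.unitOfCoprime a hcop)^2 : (ZMod k)ˣ) : ZMod k) := by push_cast; ring
      _ = 1 := by rw [h2]; rfl
  have key : ∀ m : ℕ, Nat.Coprime m k → (k : ℕ) ∣ m^2 - 1 := by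
    intro m hcop
    have hs := hsq m hcop
    have h2 : ((m^2 - 1 : ℕ) : ZMod k) = 0 := by
      have hm1 : 1 ≤ m^2 := by
        rcases Nat.eq_zero_or_pos m with rfl | hm
        · exfalso; simp [Nat.Coprime] at hcop; omega
        · nlinarith
      push_cast [hm1]
      rw [hs]; ring
    exact (ZMod.natCast_eq_zero_iff _ _).mp h2
  have hdvd : k ∣ 3 ∨ k ∣ 8 ∨ k ∣ 24 := by
    rcases Nat.even_or_odd k with hke | hko
    · by_cases h3 : 3 ∣ k
      · by_cases h5 : 5 ∣ k
        · exfalso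
          obtain ⟨two, htwo⟩ := hke
          have h30 : 30 ∣ k := by
            have h2k : 2 ∣ k := ⟨two, by omega⟩
            have h6 : 6 ∣ k := Nat.Coprime.mul_dvd_of_dvd_of_dvd (by norm_num) h2k h3
            exact Nat.Coprime.mul_dvd_of_dvd_of_dvd (by norm_num) h6 h5
          have := Nat.totient_dvd_of_dvd h30
          rw [show Nat.totient 30 = 8 from by decide] at this
          have := Nat.le_of_dvd (Nat.totient_pos.mpr (by omega)) this
          omega
        · right; right
          have := key 5 ((Nat.Prime.coprime_iff_not_dvd (by norm_num)).mpr h5)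
          simpa using this
      · right; left
        have := key 3 ((Nat.Prime.coprime_iff_not_dvd (by norm_num)).mpr h3)
        simpa using this
    · left
      have := key 2 hko.coprime_two_left
      simpa using this
  have hk24 : k ≤ 24 := by
    rcases hdvd with h | h | h <;> exact Nat.le_of_dvd (by norm_num) h |>.trans (by norm_num)
  interval_cases k <;> revert h <;> simp <;> decide

theorem stmt_16 (t : ℚ) (ht : t ≠ 0 ∧ t ≠ 1 ∧ t ≠ -1 ∧ t ≠ 2 ∧ t ≠ -2)
    (Dt : Matrix (Fin 2) (Fin 2) ℚ) (hDt : Dt = !![0, -1; 1, t])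
    (X : Matrix (Fin 2) (Fin 2) ℚ) (hcomm : X * Dt = Dt * X) (hdet : X.det ≠ 0)
    (k : ℕ) (hk : 2 ≤ k)
    (hord : ∃ c : ℚ, c ≠ 0 ∧ X ^ k = c • (1 : Matrix (Fin 2) (Fin 2) ℚ))
    (hmin : ∀ j : ℕ, 1 ≤ j → j < k →
      ¬ ∃ c : ℚ, c ≠ 0 ∧ X ^ j = c • (1 : Matrix (Fin 2) (Fin 2) ℚ)) :
    k ∈ ({2, 3, 4, 6} : Set ℕ) := by
  obtain ⟨ht0, ht1, htm1, ht2, htm2⟩ := ht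
  subst hDt
  set a : ℚ := X 0 0 with ha
  set b : ℚ := X 1 0 with hb
  have hX : X = !![a, -b; b, a + t * b] := by
    have e1 := congrFun (congrFun hcomm 0) 0
    have e2 := congrFun (congrFun hcomm 1) 0
    simp [Matrix.mul_apply, Fin.sum_univ_two] at e1 e2
    ext i j
    fin_cases i <;> fin_cases j <;> simp [ha, hb] <;> linarith
  -- b ≠ 0
  have hbne : b ≠ 0 := by
    intro hb0
    apply hmin 1 le_rfl (by omega)
    have hane : a ≠ 0 := by
      intro ha0
      apply hdet
      rw [hX, Matrix.det_fin_two_of, ha0, hb0]; ring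
    refine ⟨a, hane, ?_⟩
    rw [pow_one, hX, hb0]
    ext i j
    fin_cases i <;> fin_cases j <;> simp [Matrix.one_apply]
  -- complex eigenvalues
  obtain ⟨δ, hδ⟩ := IsAlgClosed.exists_pow_nat_eq ((t:ℂ)^2 - 4) zero_lt_two
  have hδ0 : δ ≠ 0 := by
    intro h
    rw [h] at hδ
    have h2 : ((t:ℂ) - 2) * ((t:ℂ) + 2) = 0 := by linear_combination -hδ
    rcases mul_eq_zero.mp h2 with h | h
    · exact ht2 (by exact_mod_cast sub_eq_zero.mp h)
    · exact htm2 (by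
        have : (t:ℂ) = -2 := by linear_combination h
        exact_mod_cast this)
  set lam1 : ℂ := ((t:ℂ) + δ)/2 with hl1
  set lam2 : ℂ := ((t:ℂ) - δ)/2 with hl2
  have hsum : lam1 + lam2 = (t:ℂ) := by rw [hl1, hl2]; ring
  have hprod : lam1 * lam2 = 1 := by rw [hl1, hl2]; field_simp; linear_combination -hδ
  have hlne : lam1 ≠ lam2 := by
    intro h; apply hδ0
    have h2 : δ = lam1 - lam2 := by rw [hl1, hl2]; ring
    rw [h2, h, sub_self]
  have hq1 : lam1^2 - t*lam1 + 1 = 0 := by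
    linear_combination (lam1 + ((t:ℂ)+δ)/2 - t) * hl1 + hδ/4
  have hq2 : lam2^2 - t*lam2 + 1 = 0 := by
    linear_combination (lam2 + ((t:ℂ)-δ)/2 - t) * hl2 + hδ/4
  set μ1 : ℂ := (a:ℂ) + b * lam1 with hμ1
  set μ2 : ℂ := (a:ℂ) + b * lam2 with hμ2
  -- the complex matrix and diagonalization
  set φ : Matrix (Fin 2) (Fin 2) ℚ →+* Matrix (Fin 2) (Fin 2) ℂ := (Rat.castHom ℂ).mapMatrix with hφ
  set Xc : Matrix (Fin 2) (Fin 2) ℂ := φ X with hXc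
  set P : Matrix (Fin 2) (Fin 2) ℂ := !![1, 1; -lam1, -lam2] with hP
  set Δ : Matrix (Fin 2) (Fin 2) ℂ := Matrix.diagonal ![μ1, μ2] with hΔ
  have hPdet : P.det ≠ 0 := by
    rw [hP, Matrix.det_fin_two_of]
    intro h
    exact hlne (by linear_combination h)
  have hXcE : Xc = !![(a:ℂ), -(b:ℂ); (b:ℂ), (a:ℂ) + t * b] := by
    rw [hXc, hX, hφ]
    ext i j
    fin_cases i <;> fin_cases j <;> simp
  have hXP : Xc * P = P * Δ := by
    rw [hXcE, hP, hΔ]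
    ext i j
    fin_cases i <;> fin_cases j <;>
      simp [Matrix.mul_apply, Fin.sum_univ_two, Matrix.diagonal] <;>
      first
        | ring1
        | linear_combination (-(b:ℂ)) * hq1
        | linear_combination (-(b:ℂ)) * hq2
        | linear_combination ((b:ℂ)) * hq1
        | linear_combination ((b:ℂ)) * hq2
        | linear_combination ((b:ℂ)/4) * hδ
        | linear_combination (-(b:ℂ)/4) * hδ
  have : Invertible P := P.invertibleOfIsUnitDet (Ne.isUnit hPdet)
  have hconj : Xc = P * Δ * ⅟P := by
    calc Xc = Xc * P * ⅟P := by rw [Matrix.mul_assoc, mul_invOf_self, Matrix.mul_one]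
      _ = P * Δ * ⅟P := by rw [hXP]
  have hpow : ∀ n : ℕ, Xc ^ n = P * Δ ^ n * ⅟P := by
    intro n
    induction n with
    | zero => simp
    | succ n ih =>
        rw [pow_succ, ih, hconj, pow_succ]
        calc P * Δ ^ n * ⅟P * (P * Δ * ⅟P) = P * Δ ^ n * (⅟P * P) * Δ * ⅟P := by
              noncomm_ring
          _ = P * (Δ ^ n * Δ) * ⅟P := by rw [invOf_mul_self]; noncomm_ring
  have hΔpow : ∀ n : ℕ, Δ ^ n = Matrix.diagonal ![μ1 ^ n, μ2 ^ n] := by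
    intro n
    rw [hΔ, Matrix.diagonal_pow]
    ext i j
    fin_cases i <;> fin_cases j <;> simp [Matrix.diagonal_apply, Pi.pow_apply]
  -- scalar powers transfer
  have hscalar : ∀ (n : ℕ) (c : ℂ), Xc ^ n = c • 1 ↔ (μ1 ^ n = c ∧ μ2 ^ n = c) := by
    intro n c
    constructor
    · intro h
      have hΔn : Δ ^ n = c • 1 := by
        have : P * Δ ^ n * ⅟P = c • 1 := by rw [← hpow, h]
        calc Δ ^ n = ⅟P * (P * Δ ^ n * ⅟P) * P := by
              rw [← Matrix.mul_assoc, ← Matrix.mul_assoc, invOf_mul_self, Matrix.one_mul,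
                Matrix.mul_assoc, invOf_mul_self, Matrix.mul_one]
          _ = ⅟P * (c • 1) * P := by rw [this]
          _ = c • 1 := by
              simp only [mul_smul_comm, smul_mul_assoc, Matrix.mul_one, Matrix.one_mul,
                invOf_mul_self]
      rw [hΔpow] at hΔn
      constructor
      · have := congrFun (congrFun hΔn 0) 0
        simpa using this
      · have := congrFun (congrFun hΔn 1) 1
        simpa using this
    · rintro ⟨h1, h2⟩
      rw [hpow, hΔpow, h1, h2]
      have : Matrix.diagonal ![c, c] = c • (1 : Matrix (Fin 2) (Fin 2) ℂ) := by
        ext i j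
        fin_cases i <;> fin_cases j <;> simp [Matrix.one_apply]
      rw [this]
      simp only [mul_smul_comm, smul_mul_assoc, Matrix.mul_one, Matrix.one_mul,
        mul_invOf_self, invOf_mul_self]
  obtain ⟨c, hc0, hck⟩ := hord
  have hXck : Xc ^ k = (c:ℂ) • 1 := by
    rw [hXc, ← map_pow, hck, hφ]
    ext i j
    fin_cases i <;> fin_cases j <;> simp [Matrix.one_apply]
  obtain ⟨hμ1k, hμ2k⟩ := (hscalar k (c:ℂ)).mp hXck
  have hcC : (c:ℂ) ≠ 0 := by exact_mod_cast hc0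
  have hμ2ne : μ2 ≠ 0 := by
    intro h; apply hcC; rw [← hμ2k, h, zero_pow (by omega)]
  set ζ : ℂ := μ1 / μ2 with hζ
  have hζk : ζ ^ k = 1 := by
    rw [hζ, div_pow, hμ1k, hμ2k, div_self hcC]
  have hζmin : ∀ j : ℕ, 0 < j → j < k → ζ ^ j ≠ 1 := by
    intro j hj hjk h1
    have hμeq : μ1 ^ j = μ2 ^ j := by
      rw [hζ, div_pow, div_eq_one_iff_eq (pow_ne_zero _ hμ2ne)] at h1
      exact h1
    have hXcj : Xc ^ j = (μ1 ^ j) • 1 := (hscalar j _).mpr ⟨rfl, hμeq.symm⟩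
    set c' : ℚ := (X ^ j) 0 0 with hc'
    have hc'C : (c' : ℂ) = μ1 ^ j := by
      have h0 := congrFun (congrFun hXcj 0) 0
      have hm : (Xc ^ j) 0 0 = ((X ^ j) 0 0 : ℂ) := by
        rw [hXc, ← map_pow, hφ]; simp
      rw [hm] at h0
      simpa [hc'] using h0
    have hμ1ne' : μ1 ≠ 0 := fun h' => hcC (by rw [← hμ1k, h', zero_pow (by omega)])
    have hc'0 : c' ≠ 0 := by
      intro h
      rw [h] at hc'C
      exact pow_ne_zero j hμ1ne' (by exact_mod_cast hc'C.symm)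
    apply hmin j hj hjk
    refine ⟨c', hc'0, ?_⟩
    ext i j'
    have h0 := congrFun (congrFun hXcj i) j'
    have hm : (Xc ^ j) i j' = ((X ^ j) i j' : ℂ) := by
      rw [hXc, ← map_pow, hφ]; simp
    rw [hm, ← hc'C] at h0
    have : ((X ^ j) i j' : ℂ) = ((c' • (1 : Matrix (Fin 2) (Fin 2) ℚ)) i j' : ℂ) := by
      rw [h0]
      by_cases hij : i = j' <;> simp [Matrix.one_apply, hij]
    exact_mod_cast this
  -- ζ is a primitive k-th root of unity
  have horder : orderOf ζ = k := by
    rw [orderOf_eq_iff (by omega)]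
    exact ⟨hζk, fun m hmk hm => hζmin m hm hmk⟩
  have hprim : IsPrimitiveRoot ζ k := horder ▸ IsPrimitiveRoot.orderOf ζ
  -- rational quadratic satisfied by ζ
  have hμsum : μ1 + μ2 = ((2*a + b*t : ℚ) : ℂ) := by
    push_cast
    rw [hμ1, hμ2]
    linear_combination (b:ℂ) * hsum
  have hμprod : μ1 * μ2 = ((a^2 + a*b*t + b^2 : ℚ) : ℂ) := by
    push_cast
    rw [hμ1, hμ2]
    linear_combination (b:ℂ)*(a:ℂ)*hsum + (b:ℂ)^2*hprod
  set d : ℚ := a^2 + a*b*t + b^2 with hd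
  set s : ℚ := 2*a + b*t with hs
  have hdne : d ≠ 0 := by
    intro h
    have : μ1 * μ2 = 0 := by rw [hμprod, h]; simp
    rcases mul_eq_zero.mp this with h' | h'
    · exact hcC (by rw [← hμ1k, h', zero_pow (by omega)])
    · exact hμ2ne h'
  set r : ℚ := (s^2 - 2*d)/d with hr
  have hζquad : ζ^2 - (r:ℂ) * ζ + 1 = 0 := by
    have hdC : (d:ℂ) ≠ 0 := by exact_mod_cast hdne
    have hrC : (r:ℂ) * (d:ℂ) = (s:ℂ)^2 - 2*(d:ℂ) := by
      rw [hr]; push_cast; rw [div_mul_cancel₀ _ hdC]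
    have hμ1ne : μ1 ≠ 0 := fun h => hcC (by rw [← hμ1k, h, zero_pow (by omega)])
    have hζμ : ζ * μ2 = μ1 := by rw [hζ]; exact div_mul_cancel₀ _ hμ2ne
    have key : μ1^2 - (r:ℂ)*μ1*μ2 + μ2^2 = 0 := by
      linear_combination (μ1+μ2+(s:ℂ))*hμsum - (2+(r:ℂ))*hμprod - hrC
    have h3 : (ζ^2 - (r:ℂ)*ζ + 1) * μ2^2 = 0 := by
      linear_combination (ζ*μ2 + μ1 - (r:ℂ)*μ2) * hζμ + key
    exact (mul_eq_zero.mp h3).resolve_right (pow_ne_zero 2 hμ2ne)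
  -- the minimal polynomial of ζ is the k-th cyclotomic polynomial, of degree ≤ 2
  set q : Polynomial ℚ := Polynomial.X^2 - Polynomial.C r * Polynomial.X + Polynomial.C 1
    with hqdef
  have hqm : q.Monic := by
    rw [hqdef]
    monicity!
  have haev : Polynomial.aeval ζ q = 0 := by
    rw [hqdef]
    simp only [map_add, map_sub, _root_.map_mul, map_pow, _root_.map_one, Polynomial.aeval_X,
      Polynomial.aeval_C]
    have hrmap : (algebraMap ℚ ℂ) r = (r : ℂ) := by norm_num
    rw [hrmap]
    linear_combination hζquad
  have hcyc := Polynomial.cyclotomic_eq_minpoly_rat hprim (by omega : 0 < k)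
  have htot : k.totient ≤ 2 := by
    have h1 : k.totient = (minpoly ℚ ζ).natDegree := by
      rw [← hcyc, Polynomial.natDegree_cyclotomic]
    have h2 : (minpoly ℚ ζ).natDegree ≤ q.natDegree :=
      Polynomial.natDegree_le_natDegree (minpoly.min ℚ ζ hqm haev)
    have h3 : q.natDegree = 2 := by rw [hqdef]; compute_degree!
    omega
  exact tot_helper16 hk htot
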